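/- Let a, b, n ∈ ℕ with a + b ≤ n, let ε ≥ 0, let U be a 2^n × 2^n unitary, and let A be an (a,b)-block-diagonal complex matrix (not necessarily unitary) with ∥U − A∥_op ≤ ε. Then there exists an (a,b)-block-diagonal unitary V with ∥U − V∥_op ≤ 2ε. -/

import Mathlib

open scoped Kronecker Classical Matrix

namespace PauliSpec

/-- The field 𝔽₂. -/
abbrev F2 := ZMod 2

/-- The phase space 𝔽₂^{2n}, identified with pairs `(xX, xZ) ∈ 𝔽₂^n × 𝔽₂^n`. -/
abbrev PhS (n : ℕ) := (Fin n → F2) × (Fin n → F2)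

/-- Index type for `n`-qubit matrices: ℂ^{2^n} ≅ ⊗_{j=1}^n ℂ². -/
abbrev QIdx (n : ℕ) := Fin n → Fin 2

/-- The 2×2 Pauli X matrix. -/
def PauliX : Matrix (Fin 2) (Fin 2) ℂ := !![0, 1; 1, 0]

/-- The 2×2 Pauli Y matrix. -/
def PauliY : Matrix (Fin 2) (Fin 2) ℂ := !![0, -Complex.I; Complex.I, 0]

/-- The 2×2 Pauli Z matrix. -/
def PauliZ : Matrix (Fin 2) (Fin 2) ℂ := !![1, 0; 0, -1]

/-- The Weyl operator `W_x := i^{xX·xZ} ⊗_j (X^{xX_j} Z^{xZ_j})`, written entrywise: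
the `(u, v)` entry of the `n`-fold Kronecker product of matrices `M_j` is `∏_j (M_j)_{u_j v_j}`. -/
noncomputable def Weyl {n : ℕ} (x : PhS n) : Matrix (QIdx n) (QIdx n) ℂ :=
  fun u v =>
    (Complex.I ^ (∑ j, (x.1 j).val * (x.2 j).val)) *
      ∏ j, (PauliX ^ (x.1 j).val * PauliZ ^ (x.2 j).val) (u j) (v j)

/-- The symplectic product `[x,y] := ∑_j (xX_j·yZ_j + xZ_j·yX_j) ∈ 𝔽₂`. -/
def sympl {n : ℕ} (x y : PhS n) : F2 :=
  ∑ j, (x.1 j * y.2 j + x.2 j * y.1 j)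

lemma sympl_add_left {n : ℕ} (x y z : PhS n) :
    sympl (x + y) z = sympl x z + sympl y z := by
  simp only [sympl, Prod.fst_add, Prod.snd_add, Pi.add_apply, add_mul]
  rw [← Finset.sum_add_distrib]
  exact Finset.sum_congr rfl fun j _ => by ring

lemma sympl_smul_left {n : ℕ} (c : F2) (x z : PhS n) :
    sympl (c • x) z = c * sympl x z := by
  simp only [sympl, Prod.smul_fst, Prod.smul_snd, Pi.smul_apply, smul_eq_mul, Finset.mul_sum]
  exact Finset.sum_congr rfl fun j _ => by ring

/-- The symplectic complement `S^⊥ := {x : [x,y] = 0 for all y ∈ S}`. -/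
def symplComplement {n : ℕ} (S : Submodule F2 (PhS n)) : Submodule F2 (PhS n) where
  carrier := {x | ∀ y ∈ S, sympl x y = 0}
  add_mem' := by
    intro a b ha hb y hy
    rw [sympl_add_left, ha y hy, hb y hy, add_zero]
  zero_mem' := by
    intro y hy
    simp [sympl]
  smul_mem' := by
    intro c x hx y hy
    rw [sympl_smul_left, hx y hy, mul_zero]

/-- The Pauli support `supp(A) := {x : tr(W_x·A) ≠ 0}`. -/
noncomputable def pauliSupport {n : ℕ} (A : Matrix (QIdx n) (QIdx n) ℂ) : Set (PhS n) :=
  {x | (Weyl x * A).trace ≠ 0}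

/-- The Pauli projection `Π_S(A) := 2^{−n} ∑_{x∈S} tr(A·W_x)·W_x`. -/
noncomputable def pauliProj {n : ℕ} (S : Set (PhS n)) (A : Matrix (QIdx n) (QIdx n) ℂ) :
    Matrix (QIdx n) (QIdx n) ℂ :=
  (2 ^ n : ℂ)⁻¹ • ∑ᶠ x ∈ S, (A * Weyl x).trace • Weyl x

/-- The subspace `𝒲_{a,b} ⊆ 𝔽₂^{2n}`: `xX_j = 0` on the first `n−a` coordinates and
`xZ_j = 0` on the first `n−a−b` coordinates. -/
def Wab (n a b : ℕ) : Submodule F2 (PhS n) where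
  carrier := {x | (∀ j : Fin n, (j : ℕ) < n - a → x.1 j = 0) ∧
    ∀ j : Fin n, (j : ℕ) < n - a - b → x.2 j = 0}
  add_mem' := by
    rintro x y ⟨hx1, hx2⟩ ⟨hy1, hy2⟩
    refine ⟨fun j hj => ?_, fun j hj => ?_⟩
    · simp [Prod.fst_add, Pi.add_apply, hx1 j hj, hy1 j hj]
    · simp [Prod.snd_add, Pi.add_apply, hx2 j hj, hy2 j hj]
  zero_mem' := ⟨fun j _ => rfl, fun j _ => rfl⟩
  smul_mem' := by
    rintro c x ⟨hx1, hx2⟩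
    refine ⟨fun j hj => ?_, fun j hj => ?_⟩
    · simp [Prod.smul_fst, Pi.smul_apply, hx1 j hj]
    · simp [Prod.smul_snd, Pi.smul_apply, hx2 j hj]

/-- `A` is `(a,b)`-block-diagonal: under ℂ^{2^n} ≅ ℂ^{2^{n−a−b}} ⊗ ℂ^{2^b} ⊗ ℂ^{2^a},
`A = I ⊗ (∑_{y∈{0,1}^b} |y⟩⟨y| ⊗ A_y)`.  Entrywise: `A u v = 0` unless `u, v` agree on the
first `n−a` coordinates, and then the entry is `A_{u₂}(u₃, v₃)` where `u₂` is the middle `b`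
coordinates and `u₃, v₃` the last `a` coordinates. -/
def IsBlockDiag {n : ℕ} (a b : ℕ) (hab : a + b ≤ n)
    (A : Matrix (QIdx n) (QIdx n) ℂ) : Prop :=
  ∃ M : (Fin b → Fin 2) → Matrix (Fin a → Fin 2) (Fin a → Fin 2) ℂ,
    ∀ u v : QIdx n,
      A u v =
        if ∀ j : Fin n, (j : ℕ) < n - a → u j = v j then
          M (fun i => u ⟨n - a - b + i.1, by have := i.2; omega⟩)
            (fun i => u ⟨n - a + i.1, by have := i.2; omega⟩)
            (fun i => v ⟨n - a + i.1, by have := i.2; omega⟩)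
        else 0

/-- The ℓ² → ℓ² operator norm of a complex matrix. -/
noncomputable def l2OpNorm {ι κ : Type*} [Fintype ι] [Fintype κ] [DecidableEq κ]
    (A : Matrix ι κ ℂ) : ℝ :=
  ‖LinearMap.toContinuousLinearMap (Matrix.toEuclideanLin A)‖

/-- `C` is a Clifford unitary: it is unitary and conjugates every Weyl operator to a
signed Weyl operator. -/
def IsCliffordUnitary {n : ℕ} (C : Matrix (QIdx n) (QIdx n) ℂ) : Prop :=
  C ∈ Matrix.unitaryGroup (QIdx n) ℂ ∧
    ∀ x : PhS n, ∃ (y : PhS n) (s : ℂ), (s = 1 ∨ s = -1) ∧ C * Weyl x * Cᴴ = s • Weyl y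

/-- `C T C† := {y : ∃ x ∈ T, C·W_x·C† = ±W_y}`. -/
def conjSet {n : ℕ} (C : Matrix (QIdx n) (QIdx n) ℂ) (T : Set (PhS n)) : Set (PhS n) :=
  {y | ∃ x ∈ T, ∃ s : ℂ, (s = 1 ∨ s = -1) ∧ C * Weyl x * Cᴴ = s • Weyl y}

/-- The matrix acting as the 2×2 matrix `P` on qubit `i` and as the identity elsewhere:
`P_i := I^{⊗(i−1)} ⊗ P ⊗ I^{⊗(n−i)}`. -/
def onQubit {n : ℕ} (P : Matrix (Fin 2) (Fin 2) ℂ) (i : Fin n) :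
    Matrix (QIdx n) (QIdx n) ℂ :=
  fun u v => if ∀ j : Fin n, j ≠ i → u j = v j then P (u i) (v i) else 0

/-- The unitary on `2n` qubits exchanging the `i`-th qubit of the first group of `n`
qubits with the `i`-th qubit of the second group. -/
def swapQubit {n : ℕ} (i : Fin n) :
    Matrix (QIdx n × QIdx n) (QIdx n × QIdx n) ℂ :=
  fun p q =>
    if p.1 = Function.update q.1 i (q.2 i) ∧ p.2 = Function.update q.2 i (q.1 i) then 1 else 0


section Stmt9Aux

open Matrix
open scoped Matrix.Norms.L2Operator

set_option linter.unusedSectionVars false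

namespace BDProof

variable {ι κ : Type*} [Fintype ι] [Fintype κ] [DecidableEq ι] [DecidableEq κ]

noncomputable def en {ι : Type*} [Fintype ι] (x : ι → ℂ) : ℝ :=
  ‖(WithLp.equiv 2 (ι → ℂ)).symm x‖

lemma en_nonneg {ι : Type*} [Fintype ι] (x : ι → ℂ) : 0 ≤ en x := norm_nonneg _

lemma en_eq {ι : Type*} [Fintype ι] (x : ι → ℂ) :
    en x = Real.sqrt (∑ i, ‖x i‖ ^ 2) := by
  simp [en, EuclideanSpace.norm_eq]

lemma en_sq {ι : Type*} [Fintype ι] (x : ι → ℂ) :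
    en x ^ 2 = ∑ i, ‖x i‖ ^ 2 := by
  rw [en_eq, Real.sq_sqrt]; positivity

lemma en_eq_of_sq {ι κ : Type*} [Fintype ι] [Fintype κ] {x : ι → ℂ} {y : κ → ℂ}
    (h : ∑ i, ‖x i‖ ^ 2 = ∑ j, ‖y j‖ ^ 2) : en x = en y := by
  rw [en_eq, en_eq, h]

lemma en_le_of_sq {ι κ : Type*} [Fintype ι] [Fintype κ] {x : ι → ℂ} {y : κ → ℂ} {c : ℝ}
    (hc : 0 ≤ c) (h : ∑ i, ‖x i‖ ^ 2 ≤ c ^ 2 * ∑ j, ‖y j‖ ^ 2) : en x ≤ c * en y := by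
  have h2 : en x ^ 2 ≤ (c * en y) ^ 2 := by
    rw [en_sq, mul_pow, en_sq]; exact h
  have := en_nonneg y
  exact le_of_pow_le_pow_left₀ two_ne_zero (by positivity) h2

lemma en_comp_equiv {ι κ : Type*} [Fintype ι] [Fintype κ] (e : ι ≃ κ) (x : κ → ℂ) :
    en (x ∘ e) = en x :=
  en_eq_of_sq (Fintype.sum_equiv e _ _ fun i => rfl)

/-- `∑ ‖x i‖²` as the complex dot product. -/
lemma sum_sq_eq_dot {ι : Type*} [Fintype ι] (x : ι → ℂ) :
    ((∑ i, ‖x i‖ ^ 2 : ℝ) : ℂ) = star x ⬝ᵥ x := by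
  rw [dotProduct]
  push_cast
  exact Finset.sum_congr rfl fun i _ => (RCLike.conj_mul (x i)).symm

lemma en_mulVec_unitary {ι : Type*} [Fintype ι] [DecidableEq ι] {U : Matrix ι ι ℂ}
    (hU : U ∈ Matrix.unitaryGroup ι ℂ) (x : ι → ℂ) : en (U *ᵥ x) = en x := by
  refine en_eq_of_sq ?_
  have : ((∑ i, ‖(U *ᵥ x) i‖ ^ 2 : ℝ) : ℂ) = ((∑ i, ‖x i‖ ^ 2 : ℝ) : ℂ) := by
    rw [sum_sq_eq_dot, sum_sq_eq_dot, star_mulVec, ← dotProduct_mulVec, mulVec_mulVec,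
      show Uᴴ * U = 1 from Matrix.mem_unitaryGroup_iff'.mp hU, one_mulVec]
  exact_mod_cast this



lemma en_add_le {ι : Type*} [Fintype ι] (x y : ι → ℂ) : en (x + y) ≤ en x + en y :=
  norm_add_le (E := EuclideanSpace ℂ ι) (WithLp.toLp 2 x) (WithLp.toLp 2 y)

lemma opnorm_le_iff (A : Matrix ι κ ℂ) {c : ℝ} (hc : 0 ≤ c) :
    ‖A‖ ≤ c ↔ ∀ x : κ → ℂ, en (A *ᵥ x) ≤ c * en x := by
  rw [Matrix.l2_opNorm_def, ContinuousLinearMap.opNorm_le_iff hc]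
  constructor
  · intro h x
    simpa [Matrix.toEuclideanLin_apply, en] using h ((WithLp.equiv 2 (κ → ℂ)).symm x)
  · intro h x
    simpa [Matrix.toEuclideanLin_apply, en] using h ((WithLp.equiv 2 (κ → ℂ)) x)

lemma en_mulVec_le (A : Matrix ι κ ℂ) (x : κ → ℂ) : en (A *ᵥ x) ≤ ‖A‖ * en x :=
  (opnorm_le_iff A (norm_nonneg A)).mp le_rfl x

lemma norm_diagonal_le {ι : Type*} [Fintype ι] [DecidableEq ι] (d : ι → ℂ) {c : ℝ}
    (hc : 0 ≤ c) (h : ∀ i, ‖d i‖ ≤ c) : ‖Matrix.diagonal d‖ ≤ c := by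
  rw [opnorm_le_iff _ hc]
  intro x
  refine en_le_of_sq hc ?_
  rw [Finset.mul_sum]
  refine Finset.sum_le_sum fun i _ => ?_
  rw [mulVec_diagonal, norm_mul, mul_pow]
  have h1 : ‖d i‖ ^ 2 ≤ c ^ 2 := by
    have := h i; nlinarith [norm_nonneg (d i)]
  nlinarith [norm_nonneg (x i), sq_nonneg (‖x i‖)]


lemma reindex_mulVec {ι κ : Type*} [Fintype ι] [Fintype κ] [DecidableEq ι] [DecidableEq κ]
    (e : ι ≃ κ) (A : Matrix ι ι ℂ) (x : κ → ℂ) :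
    (Matrix.reindex e e A) *ᵥ x = (A *ᵥ (x ∘ e)) ∘ e.symm := by
  funext k
  simp only [Matrix.reindex_apply, Matrix.mulVec, dotProduct, Function.comp,
    Matrix.submatrix_apply]
  exact (Fintype.sum_equiv e _ _ fun j => by simp).symm

lemma norm_reindex_le {ι κ : Type*} [Fintype ι] [Fintype κ] [DecidableEq ι] [DecidableEq κ]
    (e : ι ≃ κ) (A : Matrix ι ι ℂ) : ‖Matrix.reindex e e A‖ ≤ ‖A‖ := by
  rw [opnorm_le_iff _ (norm_nonneg A)]
  intro x
  rw [reindex_mulVec]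
  calc en ((A *ᵥ (x ∘ e)) ∘ e.symm) = en (A *ᵥ (x ∘ e)) := en_comp_equiv e.symm _
    _ ≤ ‖A‖ * en (x ∘ e) := en_mulVec_le _ _
    _ = ‖A‖ * en x := by rw [en_comp_equiv]

lemma norm_reindex {ι κ : Type*} [Fintype ι] [Fintype κ] [DecidableEq ι] [DecidableEq κ]
    (e : ι ≃ κ) (A : Matrix ι ι ℂ) : ‖Matrix.reindex e e A‖ = ‖A‖ := by
  refine le_antisymm (norm_reindex_le e A) ?_
  have := norm_reindex_le e.symm (Matrix.reindex e e A)
  simpa using this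

lemma reindex_mem_unitary {ι κ : Type*} [Fintype ι] [Fintype κ] [DecidableEq ι] [DecidableEq κ]
    (e : ι ≃ κ) {A : Matrix ι ι ℂ} (hA : A ∈ Matrix.unitaryGroup ι ℂ) :
    Matrix.reindex e e A ∈ Matrix.unitaryGroup κ ℂ := by
  rw [Matrix.mem_unitaryGroup_iff'] at hA ⊢
  have : star (Matrix.reindex e e A) = Matrix.reindex e e (star A) := by
    simp [Matrix.reindex_apply, Matrix.star_eq_conjTranspose, Matrix.conjTranspose_submatrix]
  rw [this, Matrix.reindex_apply, Matrix.reindex_apply, Matrix.submatrix_mul_equiv, hA]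
  simp [Matrix.submatrix_one_equiv]

lemma blockDiagonal_mulVec {J K : Type*} [Fintype J] [Fintype K] [DecidableEq J] [DecidableEq K]
    (D : K → Matrix J J ℂ) (x : J × K → ℂ) (j : J) (k : K) :
    (Matrix.blockDiagonal D *ᵥ x) (j, k) = (D k *ᵥ fun j' => x (j', k)) j := by
  simp only [Matrix.mulVec, dotProduct, Fintype.sum_prod_type,
    Matrix.blockDiagonal_apply, ite_mul, zero_mul]
  rw [Finset.sum_comm]
  simp

lemma en_sq_prod {J K : Type*} [Fintype J] [Fintype K] (x : J × K → ℂ) :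
    en x ^ 2 = ∑ k, en (fun j => x (j, k)) ^ 2 := by
  simp only [en_sq]
  exact Fintype.sum_prod_type_right (f := fun p => ‖x p‖ ^ 2)

lemma en_le_of_sq' {ι κ : Type*} [Fintype ι] [Fintype κ] {x : ι → ℂ} {y : κ → ℂ} {c : ℝ}
    (hc : 0 ≤ c) (h : en x ^ 2 ≤ c ^ 2 * en y ^ 2) : en x ≤ c * en y := by
  have h2 : en x ^ 2 ≤ (c * en y) ^ 2 := by rw [mul_pow]; exact h
  have := en_nonneg y
  exact le_of_pow_le_pow_left₀ two_ne_zero (by positivity) h2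

lemma norm_blockDiagonal_le {J K : Type*} [Fintype J] [Fintype K] [DecidableEq J] [DecidableEq K]
    (D : K → Matrix J J ℂ) {c : ℝ} (hc : 0 ≤ c) (h : ∀ k, ‖D k‖ ≤ c) :
    ‖Matrix.blockDiagonal D‖ ≤ c := by
  rw [opnorm_le_iff _ hc]
  intro x
  refine en_le_of_sq' hc ?_
  rw [en_sq_prod (Matrix.blockDiagonal D *ᵥ x), en_sq_prod x, Finset.mul_sum]
  refine Finset.sum_le_sum fun k _ => ?_
  have heq : (fun j => (Matrix.blockDiagonal D *ᵥ x) (j, k)) = D k *ᵥ fun j => x (j, k) :=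
    funext fun j => blockDiagonal_mulVec D x j k
  rw [heq]
  have h1 : en (D k *ᵥ fun j => x (j, k)) ≤ c * en fun j => x (j, k) :=
    le_trans (en_mulVec_le _ _) (mul_le_mul_of_nonneg_right (h k) (en_nonneg _))
  have h2 := en_nonneg (D k *ᵥ fun j => x (j, k))
  nlinarith [en_nonneg (fun j => x (j, k))]


lemma norm_unitary_mul_le {ι : Type*} [Fintype ι] [DecidableEq ι] {U : Matrix ι ι ℂ}
    (hU : U ∈ Matrix.unitaryGroup ι ℂ) (M : Matrix ι ι ℂ) : ‖U * M‖ ≤ ‖M‖ := by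
  rw [opnorm_le_iff _ (norm_nonneg M)]
  intro x
  rw [← Matrix.mulVec_mulVec, en_mulVec_unitary hU]
  exact en_mulVec_le M x

lemma norm_mul_unitary_le {ι : Type*} [Fintype ι] [DecidableEq ι] {U : Matrix ι ι ℂ}
    (hU : U ∈ Matrix.unitaryGroup ι ℂ) (M : Matrix ι ι ℂ) : ‖M * U‖ ≤ ‖M‖ := by
  rw [opnorm_le_iff _ (norm_nonneg M)]
  intro x
  rw [← Matrix.mulVec_mulVec]
  calc en (M *ᵥ U *ᵥ x) ≤ ‖M‖ * en (U *ᵥ x) := en_mulVec_le M _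
    _ = ‖M‖ * en x := by rw [en_mulVec_unitary hU]

lemma conj_diag_mul {ι : Type*} [Fintype ι] [DecidableEq ι] {P : Matrix ι ι ℂ}
    (hP : Pᴴ * P = 1) (d e : ι → ℂ) :
    (P * Matrix.diagonal d * Pᴴ) * (P * Matrix.diagonal e * Pᴴ) =
      P * Matrix.diagonal (fun i => d i * e i) * Pᴴ := by
  have h1 : Pᴴ * (P * Matrix.diagonal e * Pᴴ) = Matrix.diagonal e * Pᴴ := by
    rw [← Matrix.mul_assoc, ← Matrix.mul_assoc, hP, Matrix.one_mul]
  calc (P * Matrix.diagonal d * Pᴴ) * (P * Matrix.diagonal e * Pᴴ)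
      = P * Matrix.diagonal d * (Pᴴ * (P * Matrix.diagonal e * Pᴴ)) := by
        rw [Matrix.mul_assoc]
    _ = P * Matrix.diagonal d * (Matrix.diagonal e * Pᴴ) := by rw [h1]
    _ = P * (Matrix.diagonal d * Matrix.diagonal e) * Pᴴ := by
        simp only [Matrix.mul_assoc]
    _ = P * Matrix.diagonal (fun i => d i * e i) * Pᴴ := by
        rw [Matrix.diagonal_mul_diagonal]

/-- Polar decomposition step: a matrix whose singular values all lie in `[1-ε, 1+ε]`
is `ε`-close to a unitary. -/
lemma exists_unitary_close {ι : Type*} [Fintype ι] [DecidableEq ι]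
    (B : Matrix ι ι ℂ) (ε : ℝ) (hε0 : 0 ≤ ε) (hε1 : ε < 1)
    (hub : ∀ x : ι → ℂ, en (B *ᵥ x) ≤ (1 + ε) * en x)
    (hlb : ∀ x : ι → ℂ, (1 - ε) * en x ≤ en (B *ᵥ x)) :
    ∃ W ∈ Matrix.unitaryGroup ι ℂ, ‖B - W‖ ≤ ε := by
  classical
  set H := Bᴴ * B with hHdef
  have hH : H.IsHermitian := Matrix.isHermitian_conjTranspose_mul_self B
  set μ : ι → ℝ := hH.eigenvalues with hμdef
  -- eigenvalue bounds
  have key : ∀ i, (1 - ε) ^ 2 ≤ μ i ∧ μ i ≤ (1 + ε) ^ 2 := by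
    intro i
    set v : ι → ℂ := ⇑(hH.eigenvectorBasis i) with hvdef
    have hv1 : en v = 1 := hH.eigenvectorBasis.orthonormal.1 i
    have hsum : (∑ j, ‖v j‖ ^ 2 : ℝ) = 1 := by
      have := en_sq v
      rw [hv1] at this
      simpa using this.symm
    have hBv : ((∑ j, ‖(B *ᵥ v) j‖ ^ 2 : ℝ) : ℂ) = (μ i : ℂ) := by
      rw [sum_sq_eq_dot, Matrix.star_mulVec, ← dotProduct_mulVec,
        Matrix.mulVec_mulVec]
      rw [show (Bᴴ * B) *ᵥ v = μ i • v from hH.mulVec_eigenvectorBasis i]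
      rw [RCLike.real_smul_eq_coe_smul (K := ℂ), dotProduct_smul,
        ← sum_sq_eq_dot v, hsum]
      simp
    have hBv' : (∑ j, ‖(B *ᵥ v) j‖ ^ 2 : ℝ) = μ i := by exact_mod_cast hBv
    have hE : en (B *ᵥ v) ^ 2 = μ i := by rw [en_sq, hBv']
    constructor
    · have h1 := hlb v
      rw [hv1, mul_one] at h1
      nlinarith [en_nonneg (B *ᵥ v)]
    · have h1 := hub v
      rw [hv1, mul_one] at h1
      nlinarith [en_nonneg (B *ᵥ v)]
  have hμ0 : ∀ i, 0 ≤ μ i := fun i => le_trans (by positivity) (key i).1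
  set σ : ι → ℝ := fun i => Real.sqrt (μ i) with hσdef
  have hσlb : ∀ i, 1 - ε ≤ σ i := fun i => by
    have := Real.sqrt_le_sqrt (key i).1
    rwa [Real.sqrt_sq (by linarith)] at this
  have hσub : ∀ i, σ i ≤ 1 + ε := fun i => by
    have := Real.sqrt_le_sqrt (key i).2
    rwa [Real.sqrt_sq (by linarith)] at this
  have hσpos : ∀ i, 0 < σ i := fun i => lt_of_lt_of_le (by linarith) (hσlb i)
  have hσsq : ∀ i, σ i * σ i = μ i := fun i => Real.mul_self_sqrt (hμ0 i)
  set P : Matrix ι ι ℂ := (hH.eigenvectorUnitary : Matrix ι ι ℂ) with hPdef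
  have hPmem : P ∈ Matrix.unitaryGroup ι ℂ := hH.eigenvectorUnitary.2
  have hP : Pᴴ * P = 1 := Matrix.mem_unitaryGroup_iff'.mp hPmem
  have hP' : P * Pᴴ = 1 := Matrix.mem_unitaryGroup_iff.mp hPmem
  have hPHmem : Pᴴ ∈ Matrix.unitaryGroup ι ℂ := by
    rw [Matrix.mem_unitaryGroup_iff, Matrix.star_eq_conjTranspose,
      Matrix.conjTranspose_conjTranspose]
    exact hP
  set Dσ : Matrix ι ι ℂ := Matrix.diagonal (fun i => (σ i : ℂ)) with hDσdef
  set Dinv : Matrix ι ι ℂ := Matrix.diagonal (fun i => ((σ i)⁻¹ : ℝ)) with hDinvdef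
  set S : Matrix ι ι ℂ := P * Dinv * Pᴴ with hSdef
  set sqrtH : Matrix ι ι ℂ := P * Dσ * Pᴴ with hsqrtHdef
  set W : Matrix ι ι ℂ := B * S with hWdef
  have hspec : H = P * Matrix.diagonal (fun i => (μ i : ℂ)) * Pᴴ := by
    have := hH.spectral_theorem
    refine this.trans ?_
    rw [Unitary.conjStarAlgAut_apply]
    rfl
  have hσC : ∀ i, ((σ i : ℝ) : ℂ) ≠ 0 := fun i => by exact_mod_cast (hσpos i).ne'
  have hSsqrt : S * sqrtH = 1 := by
    rw [hSdef, hsqrtHdef, conj_diag_mul hP]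
    have h2 : (fun i => (((σ i)⁻¹ : ℝ) : ℂ) * ((σ i : ℝ) : ℂ)) = fun _ => (1 : ℂ) := by
      funext i
      have := hσC i
      push_cast
      field_simp
    rw [h2, Matrix.diagonal_one, Matrix.mul_one, hP']
  have hDinvstar : Dinvᴴ = Dinv := by
    rw [hDinvdef, Matrix.diagonal_conjTranspose]
    refine congrArg Matrix.diagonal (funext fun i => ?_)
    simp [Pi.star_apply, Complex.star_def, map_inv₀, Complex.conj_ofReal]
  have hSstar : Sᴴ = S := by
    rw [hSdef, Matrix.conjTranspose_mul, Matrix.conjTranspose_mul,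
      Matrix.conjTranspose_conjTranspose, hDinvstar, ← Matrix.mul_assoc]
  have hWmem : W ∈ Matrix.unitaryGroup ι ℂ := by
    rw [Matrix.mem_unitaryGroup_iff']
    have : star W = Sᴴ * Bᴴ := by
      rw [hWdef, Matrix.star_eq_conjTranspose, Matrix.conjTranspose_mul]
    rw [this, hSstar]
    calc S * Bᴴ * (B * S) = S * (Bᴴ * B) * S := by simp only [Matrix.mul_assoc]
      _ = S * H * S := by rw [← hHdef]
      _ = 1 := by
          rw [hspec, hSdef, conj_diag_mul hP, conj_diag_mul hP]
          have h3 : (fun i => (((σ i)⁻¹ : ℝ) : ℂ) * (μ i : ℂ) * (((σ i)⁻¹ : ℝ) : ℂ))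
              = fun _ => (1 : ℂ) := by
            funext i
            have := hσC i
            rw [← hσsq i]
            push_cast
            field_simp
          rw [h3, Matrix.diagonal_one, Matrix.mul_one, hP']
  have hBW : W * sqrtH = B := by
    rw [hWdef, Matrix.mul_assoc, hSsqrt, Matrix.mul_one]
  refine ⟨W, hWmem, ?_⟩
  have hsub : B - W = W * (sqrtH - 1) := by
    rw [Matrix.mul_sub, hBW, Matrix.mul_one]
  rw [hsub]
  calc ‖W * (sqrtH - 1)‖ ≤ ‖sqrtH - 1‖ := norm_unitary_mul_le hWmem _
    _ = ‖P * (Dσ - 1) * Pᴴ‖ := by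
        congr 1
        rw [Matrix.mul_sub, Matrix.sub_mul, Matrix.mul_one, hP', hsqrtHdef]
    _ ≤ ‖P * (Dσ - 1)‖ := norm_mul_unitary_le hPHmem _
    _ ≤ ‖Dσ - 1‖ := norm_unitary_mul_le hPmem _
    _ ≤ ε := by
        have : Dσ - 1 = Matrix.diagonal (fun i => ((σ i : ℝ) : ℂ) - 1) := by
          rw [hDσdef, ← Matrix.diagonal_one, Matrix.diagonal_sub]
        rw [this]
        refine norm_diagonal_le _ hε0 fun i => ?_
        have : ((σ i : ℝ) : ℂ) - 1 = ((σ i - 1 : ℝ) : ℂ) := by push_cast; ring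
        rw [this, Complex.norm_real]
        rw [Real.norm_eq_abs, abs_le]
        constructor <;> [linarith [hσlb i]; linarith [hσub i]]

end BDProof

namespace BDProof

lemma l2OpNorm_eq_norm {ι κ : Type*} [Fintype ι] [Fintype κ] [DecidableEq κ]
    (A : Matrix ι κ ℂ) : PauliSpec.l2OpNorm A = ‖A‖ := rfl

/-- Splitting of `Fin n → Fin 2` into the last `a` coordinates and the first `n - a`. -/
def blkEquiv (a n : ℕ) (hab : a ≤ n) :
    (Fin n → Fin 2) ≃ ((Fin a → Fin 2) × (Fin (n - a) → Fin 2)) where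
  toFun u := (fun i => u ⟨n - a + i.1, by have := i.2; omega⟩,
              fun s => u ⟨s.1, by have := s.2; omega⟩)
  invFun p t := if h : (t : ℕ) < n - a then p.2 ⟨(t : ℕ), h⟩
    else p.1 ⟨(t : ℕ) - (n - a), by have := t.2; omega⟩
  left_inv u := by
    funext t
    by_cases h : (t : ℕ) < n - a
    · simp only [dif_pos h]
    · simp only [dif_neg h]
      exact congrArg u (Fin.ext (show n - a + ((t : ℕ) - (n - a)) = (t : ℕ) by omega))
  right_inv p := by
    refine Prod.ext ?_ ?_
    · funext i
      show (if h : _ then _ else _) = p.1 i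
      rw [dif_neg (show ¬ ((n : ℕ) - a + (i : ℕ) < n - a) by omega)]
      exact congrArg p.1 (Fin.ext (show n - a + (i : ℕ) - (n - a) = (i : ℕ) by omega))
    · funext s
      show (if h : _ then _ else _) = p.2 s
      rw [dif_pos (by exact s.2)]

lemma blkEquiv_symm_apply_lt {a n : ℕ} (ha : a ≤ n)
    (p : (Fin a → Fin 2) × (Fin (n - a) → Fin 2)) (t : Fin n) (h : (t : ℕ) < n - a) :
    (blkEquiv a n ha).symm p t = p.2 ⟨(t : ℕ), h⟩ := dif_pos h

lemma blkEquiv_symm_apply_ge {a n : ℕ} (ha : a ≤ n)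
    (p : (Fin a → Fin 2) × (Fin (n - a) → Fin 2)) (t : Fin n) (h : ¬ (t : ℕ) < n - a) :
    (blkEquiv a n ha).symm p t = p.1 ⟨(t : ℕ) - (n - a), by have := t.2; omega⟩ := dif_neg h

end BDProof

end Stmt9Aux

open Matrix BDProof in
open scoped Matrix.Norms.L2Operator in
theorem stmt9 (a b n : ℕ) (hab : a + b ≤ n) (ε : ℝ) (hε : 0 ≤ ε)
    (U : Matrix (QIdx n) (QIdx n) ℂ) (hU : U ∈ Matrix.unitaryGroup (QIdx n) ℂ)
    (A : Matrix (QIdx n) (QIdx n) ℂ) (hA : IsBlockDiag a b hab A)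
    (hUA : l2OpNorm (U - A) ≤ ε) :
    ∃ V : Matrix (QIdx n) (QIdx n) ℂ,
      IsBlockDiag a b hab V ∧ V ∈ Matrix.unitaryGroup (QIdx n) ℂ ∧ l2OpNorm (U - V) ≤ 2 * ε := by
  classical
  rw [l2OpNorm_eq_norm] at hUA
  rcases le_or_gt 1 ε with hε1 | hε1
  · -- take V = 1
    refine ⟨1, ⟨fun _ => 1, fun u v => ?_⟩, one_mem _, ?_⟩
    · by_cases hc : ∀ j : Fin n, (j : ℕ) < n - a → u j = v j
      · rw [if_pos hc]
        show (1 : Matrix (QIdx n) (QIdx n) ℂ) u v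
            = (1 : Matrix (Fin a → Fin 2) (Fin a → Fin 2) ℂ)
              (fun i => u ⟨n - a + i.1, by have := i.2; omega⟩)
              (fun i => v ⟨n - a + i.1, by have := i.2; omega⟩)
        by_cases h3 : (fun i : Fin a => u ⟨n - a + i.1, by have := i.2; omega⟩)
            = (fun i : Fin a => v ⟨n - a + i.1, by have := i.2; omega⟩)
        · have huv : u = v := by
            funext t
            by_cases ht : (t : ℕ) < n - a
            · exact hc t ht
            · have h4 : u ⟨n - a + ((t : ℕ) - (n - a)), by have := t.2; omega⟩
                  = v ⟨n - a + ((t : ℕ) - (n - a)), by have := t.2; omega⟩ :=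
                congrFun h3 ⟨(t : ℕ) - (n - a), by have := t.2; omega⟩
              rw [show (⟨n - a + ((t : ℕ) - (n - a)), by have := t.2; omega⟩ : Fin n) = t
                  from Fin.ext (show n - a + ((t : ℕ) - (n - a)) = (t : ℕ) by omega)] at h4
              exact h4
          rw [huv, Matrix.one_apply_eq, Matrix.one_apply_eq]
        · have hne : u ≠ v := fun h => h3 (by rw [h])
          rw [Matrix.one_apply_ne hne, Matrix.one_apply_ne h3]
      · rw [if_neg hc]
        have hne : u ≠ v := fun h => hc (fun j _ => by rw [h])
        exact Matrix.one_apply_ne hne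
    · rw [l2OpNorm_eq_norm]
      haveI : Nonempty (QIdx n) := ⟨fun _ => 0⟩
      calc ‖U - 1‖ ≤ ‖U‖ + ‖(1 : Matrix (QIdx n) (QIdx n) ℂ)‖ := norm_sub_le _ _
        _ = 1 + 1 := by rw [CStarRing.norm_of_mem_unitary hU, norm_one]
        _ ≤ 2 * ε := by linarith
  · -- ε < 1 : polar decomposition blockwise
    obtain ⟨M, hM⟩ := hA
    have ha' : a ≤ n := by omega
    set e := blkEquiv a n ha' with he
    set mid : (Fin (n - a) → Fin 2) → (Fin b → Fin 2) :=
      fun k i => k ⟨n - a - b + i.1, by have := i.2; omega⟩ with hmiddef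
    set N : (Fin (n - a) → Fin 2) → Matrix (Fin a → Fin 2) (Fin a → Fin 2) ℂ :=
      fun k => M (mid k) with hNdef
    set k₀ : (Fin b → Fin 2) → (Fin (n - a) → Fin 2) :=
      fun y t => if h : n - a - b ≤ (t : ℕ) then y ⟨(t : ℕ) - (n - a - b), by have := t.2; omega⟩
        else 0 with hk₀def
    have hmid : ∀ y, mid (k₀ y) = y := by
      intro y
      funext i
      show (if h : _ then _ else _) = y i
      rw [dif_pos (show n - a - b ≤ n - a - b + (i : ℕ) by omega)]
      exact congrArg y (Fin.ext (show n - a - b + (i : ℕ) - (n - a - b) = (i : ℕ) by omega))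
    -- the reindexed A is block diagonal
    have hA' : Matrix.reindex e e A = Matrix.blockDiagonal N := by
      ext p q
      obtain ⟨j, k⟩ := p
      obtain ⟨j', k'⟩ := q
      rw [Matrix.reindex_apply, Matrix.submatrix_apply,
        hM (e.symm (j, k)) (e.symm (j', k')), Matrix.blockDiagonal_apply]
      by_cases hk : k = k'
      · subst hk
        rw [if_pos rfl, if_pos (fun t ht =>
          (blkEquiv_symm_apply_lt ha' (j, k) t ht).trans
            (blkEquiv_symm_apply_lt ha' (j', k) t ht).symm)]
        have h1 : (fun i : Fin b => e.symm (j, k) ⟨n - a - b + i.1, by have := i.2; omega⟩)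
            = mid k :=
          funext fun i => blkEquiv_symm_apply_lt ha' (j, k)
            ⟨n - a - b + i.1, by have := i.2; omega⟩
            (show n - a - b + i.1 < n - a by have := i.2; omega)
        have h2 : (fun i : Fin a => e.symm (j, k) ⟨n - a + i.1, by have := i.2; omega⟩) = j :=
          funext fun i => (blkEquiv_symm_apply_ge ha' (j, k)
            ⟨n - a + i.1, by have := i.2; omega⟩ (show ¬ n - a + i.1 < n - a by omega)).trans
            (congrArg j (Fin.ext (show n - a + i.1 - (n - a) = i.1 by omega)))
        have h3 : (fun i : Fin a => e.symm (j', k) ⟨n - a + i.1, by have := i.2; omega⟩) = j' :=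
          funext fun i => (blkEquiv_symm_apply_ge ha' (j', k)
            ⟨n - a + i.1, by have := i.2; omega⟩ (show ¬ n - a + i.1 < n - a by omega)).trans
            (congrArg j' (Fin.ext (show n - a + i.1 - (n - a) = i.1 by omega)))
        rw [h1, h2, h3]
      · rw [if_neg hk, if_neg]
        intro hcond
        refine hk (funext fun s => ?_)
        have h5 := hcond ⟨s.1, by have := s.2; omega⟩ (show (s : ℕ) < n - a from s.2)
        have h6 : k ⟨s.1, s.2⟩ = k' ⟨s.1, s.2⟩ :=
          (blkEquiv_symm_apply_lt ha' (j, k) ⟨s.1, by have := s.2; omega⟩ s.2).symm.trans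
            (h5.trans (blkEquiv_symm_apply_lt ha' (j', k') ⟨s.1, by have := s.2; omega⟩ s.2))
        simpa using h6
    have hArw : A = Matrix.reindex e.symm e.symm (Matrix.blockDiagonal N) := by
      rw [← hA', ← Matrix.reindex_symm, Equiv.symm_apply_apply]
    set U' := Matrix.reindex e e U with hU'def
    have hU'mem : U' ∈ Matrix.unitaryGroup _ ℂ := reindex_mem_unitary e hU
    have hdiff : ‖U' - Matrix.blockDiagonal N‖ ≤ ε := by
      have hsub : U' - Matrix.blockDiagonal N = Matrix.reindex e e (U - A) := by
        rw [hU'def, ← hA']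
        ext p q
        simp [Matrix.reindex_apply, Matrix.sub_apply, Matrix.submatrix_apply]
      rw [hsub, norm_reindex]
      exact hUA
    -- blockwise bounds
    have hblock : ∀ (k : Fin (n - a) → Fin 2) (x : (Fin a → Fin 2) → ℂ),
        en (N k *ᵥ x) ≤ (1 + ε) * en x ∧ (1 - ε) * en x ≤ en (N k *ᵥ x) := by
      intro k x
      set xh : ((Fin a → Fin 2) × (Fin (n - a) → Fin 2)) → ℂ :=
        fun p => if p.2 = k then x p.1 else 0 with hxhdef
      have hcollapse : ∀ (z : (Fin a → Fin 2) → ℂ),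
          ∑ p : (Fin a → Fin 2) × (Fin (n - a) → Fin 2),
            ‖(if p.2 = k then z p.1 else 0 : ℂ)‖ ^ 2 = ∑ i, ‖z i‖ ^ 2 := by
        intro z
        rw [Fintype.sum_prod_type_right (f :=
          fun p : (Fin a → Fin 2) × (Fin (n - a) → Fin 2) =>
            ‖(if p.2 = k then z p.1 else 0 : ℂ)‖ ^ 2)]
        rw [Finset.sum_eq_single k]
        · simp
        · intro k' _ hk'
          simp [hk']
        · intro h
          exact absurd (Finset.mem_univ k) h
      have hxe : en xh = en x := en_eq_of_sq (hcollapse x)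
      have hmv : Matrix.blockDiagonal N *ᵥ xh
          = fun p => if p.2 = k then (N k *ᵥ x) p.1 else 0 := by
        funext p
        obtain ⟨j, k'⟩ := p
        rw [blockDiagonal_mulVec]
        by_cases hk : k' = k
        · subst hk
          simp only [hxhdef, if_pos rfl]
          simp
        · simp only [hxhdef, if_neg hk]
          rw [show (fun _ : Fin a → Fin 2 => (0 : ℂ)) = (0 : (Fin a → Fin 2) → ℂ) from rfl,
            Matrix.mulVec_zero]
          rfl
      have hmve : en (Matrix.blockDiagonal N *ᵥ xh) = en (N k *ᵥ x) := by
        rw [hmv]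
        exact en_eq_of_sq (hcollapse _)
      have hup : en ((U' - Matrix.blockDiagonal N) *ᵥ xh) ≤ ε * en xh :=
        le_trans (en_mulVec_le _ _)
          (mul_le_mul_of_nonneg_right hdiff (en_nonneg _))
      have hdn : en ((Matrix.blockDiagonal N - U') *ᵥ xh) ≤ ε * en xh := by
        have h7 : ‖Matrix.blockDiagonal N - U'‖ ≤ ε := by
          rw [norm_sub_rev]
          exact hdiff
        exact le_trans (en_mulVec_le _ _) (mul_le_mul_of_nonneg_right h7 (en_nonneg _))
      constructor
      · have h8 : en (Matrix.blockDiagonal N *ᵥ xh) ≤ en (U' *ᵥ xh) + ε * en xh := by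
          have h9 : Matrix.blockDiagonal N *ᵥ xh
              = U' *ᵥ xh + (Matrix.blockDiagonal N - U') *ᵥ xh := by
            rw [Matrix.sub_mulVec]
            abel
          rw [h9]
          exact le_trans (en_add_le _ _) (by linarith [hdn])
        rw [hmve, en_mulVec_unitary hU'mem, hxe] at h8
        linarith
      · have h8 : en (U' *ᵥ xh) ≤ en (Matrix.blockDiagonal N *ᵥ xh) + ε * en xh := by
          have h9 : U' *ᵥ xh
              = Matrix.blockDiagonal N *ᵥ xh + (U' - Matrix.blockDiagonal N) *ᵥ xh := by
            rw [Matrix.sub_mulVec]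
            abel
          rw [h9]
          exact le_trans (en_add_le _ _) (by linarith [hup])
        rw [hmve, en_mulVec_unitary hU'mem, hxe] at h8
        linarith
    -- choose unitaries per middle-block
    have hWex : ∀ y : Fin b → Fin 2,
        ∃ W ∈ Matrix.unitaryGroup (Fin a → Fin 2) ℂ, ‖M y - W‖ ≤ ε := by
      intro y
      have h2 : N (k₀ y) = M y := congrArg M (hmid y)
      refine exists_unitary_close (M y) ε hε hε1 (fun x => ?_) (fun x => ?_)
      · rw [← h2]; exact (hblock (k₀ y) x).1
      · rw [← h2]; exact (hblock (k₀ y) x).2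
    choose W₀ hW₀mem hW₀ using hWex
    set V' := Matrix.blockDiagonal (fun k => W₀ (mid k)) with hV'def
    have hV'mem : V' ∈ Matrix.unitaryGroup _ ℂ := by
      rw [Matrix.mem_unitaryGroup_iff', Matrix.star_eq_conjTranspose, hV'def,
        Matrix.blockDiagonal_conjTranspose, ← Matrix.blockDiagonal_mul]
      have h1 : (fun k => (W₀ (mid k))ᴴ * W₀ (mid k))
          = fun _ : Fin (n - a) → Fin 2 =>
            (1 : Matrix (Fin a → Fin 2) (Fin a → Fin 2) ℂ) := by
        funext k
        exact Matrix.mem_unitaryGroup_iff'.mp (hW₀mem (mid k))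
      rw [h1]
      exact Matrix.blockDiagonal_one
    set V := Matrix.reindex e.symm e.symm V' with hVdef
    have hVmem : V ∈ Matrix.unitaryGroup (QIdx n) ℂ := reindex_mem_unitary e.symm hV'mem
    have hVapp : ∀ u v, V u v = V' (e u) (e v) := fun u v => by
      rw [hVdef, Matrix.reindex_apply, Matrix.submatrix_apply, Equiv.symm_symm]
    have hVblk : IsBlockDiag a b hab V := by
      refine ⟨W₀, fun u v => ?_⟩
      rw [hVapp u v, hV'def, Matrix.blockDiagonal_apply]
      by_cases hc : ∀ t : Fin n, (t : ℕ) < n - a → u t = v t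
      · rw [if_pos hc, if_pos (show (e u).2 = (e v).2 from
          funext fun s => hc ⟨s.1, by have := s.2; omega⟩ s.2)]
        rfl
      · rw [if_neg hc, if_neg]
        intro hk
        refine hc fun t ht => ?_
        have h5 := congrFun hk (⟨(t : ℕ), ht⟩ : Fin (n - a))
        have h6 : u ⟨(t : ℕ), by have := t.2; omega⟩ = v ⟨(t : ℕ), by have := t.2; omega⟩ := h5
        rw [show (⟨(t : ℕ), by have := t.2; omega⟩ : Fin n) = t from Fin.ext rfl] at h6
        exact h6
    have hAV : ‖A - V‖ ≤ ε := by
      have hsub : A - V = Matrix.reindex e.symm e.symm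
          (Matrix.blockDiagonal N - V') := by
        rw [hArw, hVdef]
        ext p q
        simp [Matrix.reindex_apply, Matrix.sub_apply, Matrix.submatrix_apply]
      rw [hsub, norm_reindex, hV'def, ← Matrix.blockDiagonal_sub]
      exact norm_blockDiagonal_le _ hε fun k => hW₀ (mid k)
    refine ⟨V, hVblk, hVmem, ?_⟩
    rw [l2OpNorm_eq_norm]
    calc ‖U - V‖ = ‖(U - A) + (A - V)‖ := by rw [sub_add_sub_cancel]
      _ ≤ ‖U - A‖ + ‖A - V‖ := norm_add_le _ _
      _ ≤ ε + ε := add_le_add hUA hAV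
      _ = 2 * ε := by ring

end PauliSpec
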